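/- Let z̄ = (x̄,ȳ) ∈ ℝ^m × S^n. The following are equivalent: (a) the constraint nondegeneracy holds at z̄; (b) there exists an open neighborhood U of z̄ in ℝ^m × S^n such that the W-SRCQ holds at every z ∈ U; (c) there exists an open neighborhood V of ȳ in S^n such that the W-SRCQ holds at (x̄, y) for every y ∈ V. -/

import Mathlib

open scoped Classical RealInnerProductSpace
open Matrix Set

noncomputable section

abbrev Mat (n : ℕ) : Type := Matrix (Fin n) (Fin n) ℝ

abbrev Em (m : ℕ) : Type := EuclideanSpace ℝ (Fin m)

attribute [instance] Matrix.frobeniusNormedAddCommGroup Matrix.frobeniusNormedSpace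

/-- The trace (Frobenius) inner product `⟨A,B⟩ = tr(AᵀB)` on matrices; for symmetric
matrices this is `tr(AB)`. -/
def minner {n : ℕ} (A B : Mat n) : ℝ := (Aᵀ * B).trace

/-- `P` is an orthogonal matrix. -/
def IsOrthoMat {n : ℕ} (P : Mat n) : Prop := P * Pᵀ = 1 ∧ Pᵀ * P = 1

/-- `(P, lam)` is an eigenvalue decomposition of `A` with orthogonal `P` and
nonincreasing eigenvalue vector `lam`: `A = P·Diag(lam)·Pᵀ`. -/
def IsEigDecomp {n : ℕ} (A P : Mat n) (lam : Fin n → ℝ) : Prop :=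
  IsOrthoMat P ∧ Antitone lam ∧ A = P * Matrix.diagonal lam * Pᵀ

/-- The stratum `M_{p,q}` of symmetric matrices with exactly `p` positive and `q` negative
eigenvalues. -/
def stratum (n p q : ℕ) : Set (Mat n) :=
  {A | ∃ P lam, IsEigDecomp A P lam ∧
    {i : Fin n | 0 < lam i}.ncard = p ∧ {i : Fin n | lam i < 0}.ncard = q}

/-- The metric projection `Π₊` onto the positive semidefinite cone (defined through an
eigenvalue decomposition; the value is independent of the choice of decomposition). -/
noncomputable def piPlus {n : ℕ} (A : Mat n) : Mat n :=
  if h : ∃ P lam, IsEigDecomp A P lam then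
    h.choose * Matrix.diagonal (fun i => max (h.choose_spec.choose i) 0) * h.chooseᵀ
  else 0

variable {m n : ℕ}

/-- `G(z) = g(x) + y`. -/
def Gmap (g : Em m → Mat n) (z : Em m × Mat n) : Mat n := g z.1 + z.2

/-- The adjoint `∇g(x) : Sⁿ → ℝᵐ` of the derivative `g'(x)`, characterized by
`⟨∇g(x)H, v⟩ = ⟨H, g'(x)v⟩`. -/
def gradg (g : Em m → Mat n) (x : Em m) (H : Mat n) : Em m :=
  (EuclideanSpace.equiv (Fin m) ℝ).symm
    fun k => (Hᵀ * fderiv ℝ g x (EuclideanSpace.single k 1)).trace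

/-- The Lagrangian `L(x,y) = f(x) + ⟨y, g(x)⟩`. -/
def Lfun (f : Em m → ℝ) (g : Em m → Mat n) (x : Em m) (y : Mat n) : ℝ :=
  f x + minner y (g x)

/-- The Hessian `∇²ₓₓL(x,y)` of `x ↦ L(x,y)`, as a continuous linear map `ℝᵐ → ℝᵐ`. -/
def hessL (f : Em m → ℝ) (g : Em m → Mat n) (x : Em m) (y : Mat n) : Em m →L[ℝ] Em m :=
  fderiv ℝ (fun u => gradient (fun w => Lfun f g w y) u) x

/-- The KKT mapping `F(z) = (∇f(x) + ∇g(x)y, −g(x) + Π₊(G(z)))`. -/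
def KKTF (f : Em m → ℝ) (g : Em m → Mat n) (z : Em m × Mat n) : Em m × Mat n :=
  (gradient f z.1 + gradg g z.1 z.2, - g z.1 + piPlus (Gmap g z))

/-- The lifted stratum `M̃_{p,q} = {z = (x,y) ∈ ℝᵐ × Sⁿ : G(z) ∈ M_{p,q}}`. -/
def lstratum (g : Em m → Mat n) (p q : ℕ) : Set (Em m × Mat n) :=
  {z | z.2.IsSymm ∧ Gmap g z ∈ stratum n p q}

/-- The norm `‖(u,H)‖ = sqrt(‖u‖² + ‖H‖²)` on `ℝᵐ × Sⁿ` (Frobenius norm on matrices). -/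
def pnorm {m n : ℕ} (w : Em m × Mat n) : ℝ := Real.sqrt (‖w.1‖ ^ 2 + ‖w.2‖ ^ 2)

/-- The weak strict Robinson constraint qualification (W-SRCQ) at `z`:
`g'(x)[ℝᵐ] + {PBPᵀ : B ∈ Sⁿ, B_{βγ} = 0, B_{γγ} = 0} = Sⁿ`
(for any eigenvalue decomposition `(P, lam)` of `G(z)`; independent of the choice). -/
def WSRCQ (g : Em m → Mat n) (z : Em m × Mat n) : Prop :=
  ∀ P lam, IsEigDecomp (Gmap g z) P lam →
    ∀ C : Mat n, C.IsSymm →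
      ∃ (v : Em m) (B : Mat n), B.IsSymm ∧
        (∀ i j, lam i = 0 → lam j < 0 → B i j = 0) ∧
        (∀ i j, lam i < 0 → lam j < 0 → B i j = 0) ∧
        C = fderiv ℝ g z.1 v + P * B * Pᵀ

/-- The constraint nondegeneracy at `z`:
`g'(x)[ℝᵐ] + {PBPᵀ : B ∈ Sⁿ, B_{ββ} = 0, B_{βγ} = 0, B_{γγ} = 0} = Sⁿ`. -/
def CNondeg (g : Em m → Mat n) (z : Em m × Mat n) : Prop :=
  ∀ P lam, IsEigDecomp (Gmap g z) P lam →
    ∀ C : Mat n, C.IsSymm →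
      ∃ (v : Em m) (B : Mat n), B.IsSymm ∧
        (∀ i j, lam i = 0 → lam j = 0 → B i j = 0) ∧
        (∀ i j, lam i = 0 → lam j < 0 → B i j = 0) ∧
        (∀ i j, lam i < 0 → lam j < 0 → B i j = 0) ∧
        C = fderiv ℝ g z.1 v + P * B * Pᵀ

/-- The strict Robinson constraint qualification (SRCQ) at a KKT pair `z`:
`g'(x)[ℝᵐ] + {PBPᵀ : B ∈ Sⁿ, B_{ββ} ⪰ 0, B_{βγ} = 0, B_{γγ} = 0} = Sⁿ`. -/
def SRCQ (g : Em m → Mat n) (z : Em m × Mat n) : Prop :=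
  ∀ P lam, IsEigDecomp (Gmap g z) P lam →
    ∀ C : Mat n, C.IsSymm →
      ∃ (v : Em m) (B : Mat n), B.IsSymm ∧
        (∀ u : Fin n → ℝ, (∀ i, lam i ≠ 0 → u i = 0) →
          0 ≤ ∑ i, ∑ j, u i * B i j * u j) ∧
        (∀ i j, lam i = 0 → lam j < 0 → B i j = 0) ∧
        (∀ i j, lam i < 0 → lam j < 0 → B i j = 0) ∧
        C = fderiv ℝ g z.1 v + P * B * Pᵀ

/-- The quadratic form
`Q(z,v) = ⟨v, ∇²ₓₓL(x,y)v⟩ + 2·Σ_{i∈α}Σ_{j∈γ} (−λⱼ/λᵢ)·([Pᵀ(g'(x)v)P]_{ij})²`. -/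
def Qform (f : Em m → ℝ) (g : Em m → Mat n) (z : Em m × Mat n)
    (P : Mat n) (lam : Fin n → ℝ) (v : Em m) : ℝ :=
  ⟪v, hessL f g z.1 z.2 v⟫ +
    2 * ∑ i : Fin n, ∑ j : Fin n,
      (if 0 < lam i ∧ lam j < 0 then
        (-lam j / lam i) * ((Pᵀ * fderiv ℝ g z.1 v * P) i j) ^ 2 else 0)

/-- `v ∈ appl(z)`: the blocks `ββ`, `βγ`, `γγ` of `Pᵀ(g'(x)v)P` vanish. -/
def memAppl (g : Em m → Mat n) (z : Em m × Mat n)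
    (P : Mat n) (lam : Fin n → ℝ) (v : Em m) : Prop :=
  (∀ i j, lam i = 0 → lam j = 0 → (Pᵀ * fderiv ℝ g z.1 v * P) i j = 0) ∧
  (∀ i j, lam i = 0 → lam j < 0 → (Pᵀ * fderiv ℝ g z.1 v * P) i j = 0) ∧
  (∀ i j, lam i < 0 → lam j < 0 → (Pᵀ * fderiv ℝ g z.1 v * P) i j = 0)

/-- `v ∈ app(z)`: the blocks `βγ`, `γγ` of `Pᵀ(g'(x)v)P` vanish. -/
def memApp (g : Em m → Mat n) (z : Em m × Mat n)
    (P : Mat n) (lam : Fin n → ℝ) (v : Em m) : Prop :=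
  (∀ i j, lam i = 0 → lam j < 0 → (Pᵀ * fderiv ℝ g z.1 v * P) i j = 0) ∧
  (∀ i j, lam i < 0 → lam j < 0 → (Pᵀ * fderiv ℝ g z.1 v * P) i j = 0)

/-- The weak second order condition (W-SOC) at `z`: `Q(z,v) ≠ 0` for every nonzero
`v ∈ appl(z)`. -/
def WSOC (f : Em m → ℝ) (g : Em m → Mat n) (z : Em m × Mat n) : Prop :=
  ∀ P lam, IsEigDecomp (Gmap g z) P lam →
    ∀ v : Em m, v ≠ 0 → memAppl g z P lam v → Qform f g z P lam v ≠ 0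

/-- The strong second order sufficient condition (S-SOSC) at `z`: `Q(z,v) > 0` for every
nonzero `v ∈ app(z)`. -/
def SSOSC (f : Em m → ℝ) (g : Em m → Mat n) (z : Em m × Mat n) : Prop :=
  ∀ P lam, IsEigDecomp (Gmap g z) P lam →
    ∀ v : Em m, v ≠ 0 → memApp g z P lam v → 0 < Qform f g z P lam v

/-- The second order necessary condition (SONC) at `z`. -/
def SONC (f : Em m → ℝ) (g : Em m → Mat n) (z : Em m × Mat n) : Prop :=
  ∀ P lam, IsEigDecomp (Gmap g z) P lam →
    ∀ v : Em m, v ≠ 0 →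
      (∀ u : Fin n → ℝ, (∀ i, lam i ≠ 0 → u i = 0) →
        0 ≤ ∑ i, ∑ j, u i * (Pᵀ * fderiv ℝ g z.1 v * P) i j * u j) →
      memApp g z P lam v → 0 ≤ Qform f g z P lam v

/-- The W-SOC holds uniformly on a set `S`: there is `c > 0` with `Q(z,v) ≥ c‖v‖²` for
every `z ∈ S` (in `ℝᵐ × Sⁿ`) and every `v ∈ appl(z)`. -/
def UnifWSOC (f : Em m → ℝ) (g : Em m → Mat n) (S : Set (Em m × Mat n)) : Prop :=
  ∃ c : ℝ, 0 < c ∧ ∀ z ∈ S, z.2.IsSymm →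
    ∀ P lam, IsEigDecomp (Gmap g z) P lam →
      ∀ v : Em m, memAppl g z P lam v → c * ‖v‖ ^ 2 ≤ Qform f g z P lam v

/-- `H ∈ T_z`: `H ∈ Sⁿ` with `(PᵀHP)_{ββ} = 0`. -/
def memTz {n : ℕ} (P : Mat n) (lam : Fin n → ℝ) (H : Mat n) : Prop :=
  H.IsSymm ∧ ∀ i j, lam i = 0 → lam j = 0 → (Pᵀ * H * P) i j = 0

/-- `Δ ∈ N_{G(z)}M_{p,q}`: `Δ ∈ Sⁿ` and `(PᵀΔP)_{ij} = 0` whenever `i ∉ β` or `j ∉ β`. -/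
def memNormal {n : ℕ} (P : Mat n) (lam : Fin n → ℝ) (Δ : Mat n) : Prop :=
  Δ.IsSymm ∧ ∀ i j, (lam i ≠ 0 ∨ lam j ≠ 0) → (Pᵀ * Δ * P) i j = 0

/-- The map `ξ_z : T_z → Sⁿ`, `ξ_z(H) = P·M·Pᵀ`. -/
def xiMap {n : ℕ} (P : Mat n) (lam : Fin n → ℝ) (H : Mat n) : Mat n :=
  P * (Matrix.of fun i j =>
    if 0 < lam i ∧ 0 < lam j then (Pᵀ * H * P) i j
    else if 0 < lam i ∧ lam j = 0 then (Pᵀ * H * P) i j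
    else if lam i = 0 ∧ 0 < lam j then (Pᵀ * H * P) i j
    else if 0 < lam i ∧ lam j < 0 then (lam i / (lam i - lam j)) * (Pᵀ * H * P) i j
    else if lam i < 0 ∧ 0 < lam j then (lam j / (lam j - lam i)) * (Pᵀ * H * P) i j
    else 0) * Pᵀ

/-- The linear map `𝒜_z(v,H) = (∇²ₓₓL(x,y)v − ∇g(x)(g'(x)v) + ∇g(x)H, −g'(x)v + ξ_z(H))`. -/
def Amap (f : Em m → ℝ) (g : Em m → Mat n) (z : Em m × Mat n)
    (P : Mat n) (lam : Fin n → ℝ) (v : Em m) (H : Mat n) : Em m × Mat n :=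
  (hessL f g z.1 z.2 v - gradg g z.1 (fderiv ℝ g z.1 v) + gradg g z.1 H,
    - fderiv ℝ g z.1 v + xiMap P lam H)

/-- The positive inertia index of `A` is `p`. -/
def posInertiaIs {n : ℕ} (A : Mat n) (p : ℕ) : Prop :=
  ∃ P lam, IsEigDecomp A P lam ∧ {i : Fin n | 0 < lam i}.ncard = p

/-- The negative inertia index of `A` is `q`. -/
def negInertiaIs {n : ℕ} (A : Mat n) (q : ℕ) : Prop :=
  ∃ P lam, IsEigDecomp A P lam ∧ {i : Fin n | lam i < 0}.ncard = q

end

noncomputable section Aux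

variable {n : ℕ}

def matIso : Mat n ≃ₗᵢ[ℝ] EuclideanSpace ℝ (Fin n × Fin n) := by
  refine LinearIsometryEquiv.trans ?_ (LinearIsometryEquiv.piLpCongrLeft 2 ℝ ℝ (Equiv.sigmaEquivProd (Fin n) (Fin n)))
  refine LinearIsometryEquiv.trans ?_ (LinearIsometryEquiv.piLpCurry ℝ 2 (fun _ : Fin n => fun _ : Fin n => ℝ)).symm
  exact { toFun := fun A => WithLp.toLp 2 fun i => WithLp.toLp 2 fun j => A i j
          invFun := fun x i j => x i j
          map_add' := fun _ _ => rfl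
          map_smul' := fun _ _ => rfl
          left_inv := fun _ => rfl
          right_inv := fun _ => rfl
          norm_map' := fun _ => rfl }

lemma matIso_apply (A : Mat n) (p : Fin n × Fin n) : matIso A p = A p.1 p.2 := rfl

def dotM (A B : Mat n) : ℝ := ∑ i, ∑ j, A i j * B i j

lemma inner_matIso (A B : Mat n) : ⟪matIso A, matIso B⟫ = dotM A B := by
  rw [PiLp.inner_apply]
  simp only [RCLike.inner_apply, starRingEnd_apply, star_trivial]
  rw [Fintype.sum_prod_type]
  unfold dotM
  exact Finset.sum_congr rfl fun _ _ => Finset.sum_congr rfl fun _ _ => mul_comm _ _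

lemma norm_sq_eq_dotM (A : Mat n) : ‖A‖ ^ 2 = dotM A A := by
  rw [← inner_matIso, real_inner_self_eq_norm_sq, matIso.norm_map]

lemma abs_entry_le_norm (A : Mat n) (i j : Fin n) : |A i j| ≤ ‖A‖ := by
  have h1 : A i j ^ 2 ≤ dotM A A := by
    unfold dotM
    have : A i j ^ 2 ≤ ∑ j', A i j' * A i j' := by
      refine Finset.single_le_sum (f := fun j' => A i j' * A i j') (fun _ _ => mul_self_nonneg _) (Finset.mem_univ j) |>.trans_eq' (by ring)
    refine this.trans (Finset.single_le_sum (f := fun i' => ∑ j', A i' j' * A i' j') (fun _ _ => Finset.sum_nonneg fun _ _ => mul_self_nonneg _) (Finset.mem_univ i))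
  have h2 := norm_sq_eq_dotM A
  nlinarith [abs_nonneg (A i j), norm_nonneg A, sq_abs (A i j)]

lemma dotM_eq_trace (A B : Mat n) : dotM A B = (Aᵀ * B).trace := by
  unfold dotM
  rw [Matrix.trace, Finset.sum_comm]
  simp [Matrix.diag, Matrix.mul_apply]

lemma dotM_conj (D P B Q : Mat n) : dotM D (P * B * Q) = dotM (Pᵀ * D * Qᵀ) B := by
  rw [dotM_eq_trace, dotM_eq_trace]
  have : (Pᵀ * D * Qᵀ)ᵀ * B = Q * (Dᵀ * P * B) := by
    simp [Matrix.transpose_mul, Matrix.mul_assoc]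
  rw [this, Matrix.trace_mul_comm]
  simp only [Matrix.mul_assoc]
  rw [show P * (B * (Q * Dᵀ)) = (P * B) * (Q * Dᵀ) by simp [Matrix.mul_assoc],
    Matrix.trace_mul_comm]
  simp [Matrix.mul_assoc]

lemma dotM_add_right (D X Y : Mat n) : dotM D (X + Y) = dotM D X + dotM D Y := by
  unfold dotM
  simp [Matrix.add_apply, mul_add, Finset.sum_add_distrib]

lemma dotM_std (D : Mat n) (i j : Fin n) : dotM D (Matrix.single i j 1) = D i j := by
  unfold dotM
  rw [Finset.sum_eq_single i, Finset.sum_eq_single j]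
  · simp [Matrix.single_apply_same]
  · intro b _ hb; simp [Matrix.single, hb.symm]
  · simp
  · intro a _ ha
    apply Finset.sum_eq_zero; intro b _
    simp [Matrix.single, ha.symm]
  · simp

/-- Matrices `B` that are symmetric and vanish on the βγ and γγ blocks of `lam`. -/
def patSub (lam : Fin n → ℝ) : Submodule ℝ (Mat n) where
  carrier := {B | B.IsSymm ∧ (∀ i j, lam i = 0 → lam j < 0 → B i j = 0) ∧
    (∀ i j, lam i < 0 → lam j < 0 → B i j = 0)}
  add_mem' := by
    rintro a b ⟨ha, ha1, ha2⟩ ⟨hb, hb1, hb2⟩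
    refine ⟨ha.add hb, fun i j h1 h2 => ?_, fun i j h1 h2 => ?_⟩ <;>
      simp [Matrix.add_apply, ha1, ha2, hb1, hb2, h1, h2]
  zero_mem' := ⟨Matrix.isSymm_zero, by simp, by simp⟩
  smul_mem' := by
    rintro c a ⟨ha, ha1, ha2⟩
    refine ⟨?_, fun i j h1 h2 => ?_, fun i j h1 h2 => ?_⟩
    · unfold Matrix.IsSymm
      rw [Matrix.transpose_smul, ha]
    · simp [Matrix.smul_apply, ha1 i j h1 h2]
    · simp [Matrix.smul_apply, ha2 i j h1 h2]

/-- Skew-symmetric matrices. -/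
def skewSub : Submodule ℝ (Mat n) where
  carrier := {A | Aᵀ = -A}
  add_mem' := by rintro a b ha hb; show (a+b)ᵀ = -(a+b); rw [Matrix.transpose_add, ha, hb]; exact (neg_add a b).symm
  zero_mem' := by simp
  smul_mem' := by rintro c a ha; show (c • a)ᵀ = -(c • a); rw [Matrix.transpose_smul, ha]; exact (smul_neg c a)

/-- Conjugation `B ↦ P * B * Pᵀ` as a linear map. -/
def conjL (P : Mat n) : Mat n →ₗ[ℝ] Mat n where
  toFun B := P * B * Pᵀ
  map_add' a b := by noncomm_ring
  map_smul' c a := by simp [Matrix.mul_smul, Matrix.smul_mul]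

/-- The full subspace used in the duality argument. -/
def bigSub {m : ℕ} (g : Em m → Mat n) (x : Em m) (P : Mat n) (lam : Fin n → ℝ) :
    Submodule ℝ (Mat n) :=
  (LinearMap.range ((fderiv ℝ g x).toLinearMap) ⊔ (patSub lam).map (conjL P)) ⊔ skewSub

variable {m : ℕ}

lemma fderiv_isSymm (g : Em m → Mat n) (hg : ContDiff ℝ 2 g) (hgs : ∀ x, (g x).IsSymm)
    (x : Em m) (v : Em m) : (fderiv ℝ g x v).IsSymm := by
  classical
  let T : Mat n →L[ℝ] Mat n :=
    { toLinearMap := (Matrix.transposeLinearEquiv (Fin n) (Fin n) ℝ ℝ).toLinearMap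
      cont := LinearMap.continuous_of_finiteDimensional _ }
  have hTg : (fun u => T (g u)) = g := by
    funext u
    exact hgs u
  have hdg : DifferentiableAt ℝ g x := (hg.differentiable (by norm_num)).differentiableAt
  have h1 : fderiv ℝ (fun u => T (g u)) x = T.comp (fderiv ℝ g x) := by
    rw [show (fun u => T (g u)) = (⇑T) ∘ g from rfl]
    exact (T.hasFDerivAt.comp x hdg.hasFDerivAt).fderiv
  rw [hTg] at h1
  have := congrArg (fun (L : Em m →L[ℝ] Mat n) => L v) h1
  simpa [Matrix.IsSymm, T, Matrix.transposeLinearEquiv] using this.symm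

lemma conj_isSymm (P B : Mat n) (hB : B.IsSymm) : (P * B * Pᵀ).IsSymm := by
  unfold Matrix.IsSymm at *
  rw [Matrix.transpose_mul, Matrix.transpose_mul, Matrix.transpose_transpose, hB,
    Matrix.mul_assoc]

lemma bigSub_symm_mem (g : Em m → Mat n) (hg : ContDiff ℝ 2 g) (hgs : ∀ x, (g x).IsSymm)
    (x : Em m) (P : Mat n) (lam : Fin n → ℝ) (C : Mat n) (hC : C.IsSymm)
    (h : C ∈ bigSub g x P lam) :
    ∃ v B, B ∈ patSub lam ∧ C = fderiv ℝ g x v + P * B * Pᵀ := by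
  rw [bigSub, Submodule.mem_sup] at h
  obtain ⟨X, hX, A, hA, hXA⟩ := h
  rw [Submodule.mem_sup] at hX
  obtain ⟨r, hr, s, hs, hrs⟩ := hX
  obtain ⟨v, rfl⟩ := LinearMap.mem_range.1 hr
  obtain ⟨B, hB, rfl⟩ := Submodule.mem_map.1 hs
  have hXsymm : X.IsSymm := by
    rw [← hrs]
    exact (fderiv_isSymm g hg hgs x v).add (conj_isSymm P B hB.1)
  have hA0 : A = 0 := by
    have h1 : A.IsSymm := by
      have : A = C - X := by rw [← hXA, add_sub_cancel_left]
      rw [this]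
      exact hC.sub hXsymm
    have h2 : Aᵀ = -A := hA
    rw [h1] at h2
    have : (2 : ℝ) • A = 0 := by
      rw [two_smul]
      nth_rewrite 1 [h2]
      exact neg_add_cancel A
    have := congrArg (fun M => (2 : ℝ)⁻¹ • M) this
    simpa [smul_smul] using this
  refine ⟨v, B, hB, ?_⟩
  rw [← hXA, hA0, add_zero, ← hrs]
  rfl

lemma exists_perp (W : Submodule ℝ (Mat n)) (hW : W ≠ ⊤) :
    ∃ D : Mat n, dotM D D = 1 ∧ ∀ X ∈ W, dotM D X = 0 := by
  classical
  let e := (matIso : Mat n ≃ₗᵢ[ℝ] EuclideanSpace ℝ (Fin n × Fin n))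
  let W' : Submodule ℝ (EuclideanSpace ℝ (Fin n × Fin n)) := W.map (e.toLinearEquiv : Mat n →ₗ[ℝ] _)
  have hW' : W' ≠ ⊤ := by
    intro h
    apply hW
    rw [eq_top_iff]
    intro M _
    have : e M ∈ W' := h ▸ Submodule.mem_top
    obtain ⟨M', hM', hMM'⟩ := Submodule.mem_map.1 this
    have : M' = M := e.toLinearEquiv.injective hMM'
    rwa [← this]
  have hperp : W'ᗮ ≠ ⊥ := by
    intro h
    apply hW'
    have := Submodule.orthogonal_orthogonal W'
    rw [h] at this
    rw [← this, Submodule.bot_orthogonal_eq_top]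
  obtain ⟨d, hd, hd0⟩ := Submodule.exists_mem_ne_zero_of_ne_bot hperp
  have hnd : ‖d‖ ≠ 0 := norm_ne_zero_iff.2 hd0
  refine ⟨e.symm (‖d‖⁻¹ • d), ?_, ?_⟩
  · have : dotM (e.symm (‖d‖⁻¹ • d)) (e.symm (‖d‖⁻¹ • d)) = ⟪(‖d‖⁻¹ • d), (‖d‖⁻¹ • d)⟫ := by
      rw [← inner_matIso]
      simp [e]
    rw [this, real_inner_smul_left, real_inner_smul_right, real_inner_self_eq_norm_sq]
    field_simp
  · intro X hX
    have hXW' : e X ∈ W' := Submodule.mem_map.2 ⟨X, hX, rfl⟩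
    have : dotM (e.symm (‖d‖⁻¹ • d)) X = ⟪(‖d‖⁻¹ • d), e X⟫ := by
      rw [← inner_matIso]
      simp [e]
    rw [this, real_inner_smul_left]
    have : ⟪d, e X⟫ = 0 := by
      rw [real_inner_comm]
      exact (Submodule.mem_orthogonal W' d).1 hd (e X) hXW'
    rw [this, mul_zero]

lemma dotM_smul_right (c : ℝ) (D X : Mat n) : dotM D (c • X) = c * dotM D X := by
  unfold dotM
  simp only [Matrix.smul_apply, smul_eq_mul, Finset.mul_sum]
  refine Finset.sum_congr rfl fun i _ => Finset.sum_congr rfl fun j _ => by ring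

lemma std_transpose (i j : Fin n) :
    (Matrix.single i j (1 : ℝ))ᵀ = Matrix.single j i 1 := by
  ext a b
  simp [Matrix.single, Matrix.transpose_apply, and_comm]

lemma isSymm_of_perp_skew (D : Mat n)
    (h : ∀ X ∈ (skewSub : Submodule ℝ (Mat n)), dotM D X = 0) : D.IsSymm := by
  rw [Matrix.IsSymm]
  ext i j
  rw [Matrix.transpose_apply]
  have hX : (Matrix.single j i (1 : ℝ) - Matrix.single i j 1) ∈
      (skewSub : Submodule ℝ (Mat n)) := by
    show _ᵀ = -_
    rw [Matrix.transpose_sub, std_transpose, std_transpose, neg_sub]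
  have := h _ hX
  have h2 : dotM D (Matrix.single j i 1 - Matrix.single i j 1)
      = D j i - D i j := by
    have : (Matrix.single j i (1:ℝ) - Matrix.single i j 1)
        = Matrix.single j i 1 + (-1 : ℝ) • Matrix.single i j 1 := by
      rw [neg_one_smul]; abel
    rw [this, dotM_add_right, dotM_std]
    rw [dotM_smul_right, dotM_std]; ring
  rw [h2] at this
  linarith

/-- entrywise convergence of a sequence of matrices -/
def ETend (A : ℕ → Mat n) (L : Mat n) : Prop :=
  ∀ i j, Filter.Tendsto (fun k => A k i j) Filter.atTop (nhds (L i j))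

lemma ETend.of_norm {A : ℕ → Mat n} {L : Mat n}
    (h : Filter.Tendsto A Filter.atTop (nhds L)) : ETend A L := by
  intro i j
  rw [tendsto_iff_norm_sub_tendsto_zero]
  apply squeeze_zero (fun k => norm_nonneg _) (fun k => ?_) (tendsto_iff_norm_sub_tendsto_zero.1 h)
  have := abs_entry_le_norm (A k - L) i j
  simpa [Matrix.sub_apply] using this

lemma ETend.mul {A B : ℕ → Mat n} {LA LB : Mat n} (hA : ETend A LA) (hB : ETend B LB) :
    ETend (fun k => A k * B k) (LA * LB) := by
  intro i j
  simp only [Matrix.mul_apply]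
  exact tendsto_finset_sum _ fun a _ => (hA i a).mul (hB a j)

lemma ETend.dot {A B : ℕ → Mat n} {LA LB : Mat n} (hA : ETend A LA) (hB : ETend B LB) :
    Filter.Tendsto (fun k => dotM (A k) (B k)) Filter.atTop (nhds (dotM LA LB)) := by
  unfold dotM
  exact tendsto_finset_sum _ fun i _ => tendsto_finset_sum _ fun j _ => (hA i j).mul (hB i j)

lemma ETend.const (L : Mat n) : ETend (fun _ => L) L := fun i j => tendsto_const_nhds

lemma ETend.transpose {A : ℕ → Mat n} {LA : Mat n} (hA : ETend A LA) :
    ETend (fun k => (A k)ᵀ) LAᵀ := fun i j => hA j i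

lemma ETend.unique {A : ℕ → Mat n} {L1 L2 : Mat n} (h1 : ETend A L1) (h2 : ETend A L2) :
    L1 = L2 := by
  ext i j
  exact tendsto_nhds_unique (h1 i j) (h2 i j)


lemma b_to_c (g : Em m → Mat n) (zbar : Em m × Mat n)
    (h : ∃ U : Set (Em m × Mat n), IsOpen U ∧ zbar ∈ U ∧
        ∀ z ∈ U, z.2.IsSymm → WSRCQ g z) :
    ∃ V : Set (Mat n), IsOpen V ∧ zbar.2 ∈ V ∧ ∀ y ∈ V, y.IsSymm → WSRCQ g (zbar.1, y) := by
  obtain ⟨U, hUo, hUm, hU⟩ := h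
  refine ⟨{y | (zbar.1, y) ∈ U}, ?_, ?_, ?_⟩
  · exact hUo.preimage (Continuous.prodMk_right zbar.1)
  · simpa using hUm
  · intro y hy hsy
    exact hU (zbar.1, y) hy hsy

lemma c_to_a (g : Em m → Mat n) (zbar : Em m × Mat n) (hsym : zbar.2.IsSymm)
    (h : ∃ V : Set (Mat n), IsOpen V ∧ zbar.2 ∈ V ∧
      ∀ y ∈ V, y.IsSymm → WSRCQ g (zbar.1, y)) :
    CNondeg g zbar := by
  classical
  obtain ⟨V, hVo, hVm, hV⟩ := h
  intro P lam hdec C hC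
  obtain ⟨⟨hPPt, hPtP⟩, hanti, hGeq⟩ := hdec
  set S := Finset.univ.filter (fun i : Fin n => lam i < 0) with hS
  set b : ℝ := if hne : S.Nonempty then -(S.sup' hne lam) else 1 with hb
  have hbpos : 0 < b := by
    rw [hb]
    split_ifs with hne
    · rcases Finset.exists_mem_eq_sup' hne lam with ⟨i, hi, hieq⟩
      rw [hieq]
      have : lam i < 0 := (Finset.mem_filter.1 hi).2
      linarith
    · norm_num
  have hble : ∀ i, lam i < 0 → b ≤ -(lam i) := by
    intro i hi
    have hiS : i ∈ S := Finset.mem_filter.2 ⟨Finset.mem_univ i, hi⟩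
    have hne : S.Nonempty := ⟨i, hiS⟩
    rw [hb]
    rw [dif_pos hne]
    have := Finset.le_sup' lam hiS
    linarith
  set M0 : Mat n := P * Matrix.diagonal (fun i => if lam i = 0 then (1:ℝ) else 0) * Pᵀ with hM0
  have hcont : Continuous (fun t : ℝ => zbar.2 - t • M0) := by
    exact continuous_const.sub (continuous_id.smul continuous_const)
  have h0 : (fun t : ℝ => zbar.2 - t • M0) 0 ∈ V := by simpa using hVm
  obtain ⟨δ, hδ, hball⟩ := Metric.isOpen_iff.1 (hVo.preimage hcont) 0 h0
  set ε : ℝ := min (δ/2) (b/2) with hε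
  have hεpos : 0 < ε := lt_min (by linarith) (by linarith)
  have hεb : ε < b := (min_le_right _ _).trans_lt (by linarith)
  have hεδ : ε < δ := (min_le_left _ _).trans_lt (by linarith)
  set y : Mat n := zbar.2 - ε • M0 with hy
  have hyV : y ∈ V := by
    have : (ε : ℝ) ∈ Metric.ball (0:ℝ) δ := by
      simp [Real.ball_eq_Ioo]
      constructor <;> [linarith; linarith]
    exact hball this
  have hM0symm : M0.IsSymm := conj_isSymm P _ (Matrix.isSymm_diagonal _)
  have hysymm : y.IsSymm := by
    rw [Matrix.IsSymm] at *
    rw [hy, Matrix.transpose_sub, hsym, Matrix.transpose_smul, hM0symm]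
  set lam' : Fin n → ℝ := fun i => if lam i = 0 then -ε else lam i with hlam'
  have hlamneg : ∀ i, lam' i < 0 ↔ lam i ≤ 0 := by
    intro i
    by_cases h0' : lam i = 0
    · simp [hlam', h0', hεpos]
    · simp only [hlam', if_neg h0']
      constructor
      · intro h'; exact le_of_lt h'
      · intro h'; exact lt_of_le_of_ne h' h0'
  have hG : Gmap g (zbar.1, y) = P * Matrix.diagonal lam' * Pᵀ := by
    have h1 : Gmap g (zbar.1, y) = Gmap g zbar - ε • M0 := by
      rw [Gmap, Gmap, hy]
      show g zbar.1 + (zbar.2 - ε • M0) = g zbar.1 + zbar.2 - ε • M0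
      abel
    rw [h1, hGeq, hM0]
    have h2 : ε • (P * Matrix.diagonal (fun i => if lam i = 0 then (1:ℝ) else 0) * Pᵀ)
        = P * (ε • Matrix.diagonal (fun i => if lam i = 0 then (1:ℝ) else 0)) * Pᵀ := by
      rw [← Matrix.smul_mul, ← Matrix.mul_smul]
    rw [h2]
    have h3 : P * Matrix.diagonal lam * Pᵀ - P * (ε • Matrix.diagonal fun i => if lam i = 0 then (1:ℝ) else 0) * Pᵀ
        = P * (Matrix.diagonal lam - ε • Matrix.diagonal fun i => if lam i = 0 then (1:ℝ) else 0) * Pᵀ := by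
      rw [Matrix.mul_sub, Matrix.sub_mul]
    rw [h3]
    congr 2
    ext i j
    rcases eq_or_ne i j with rfl | hij
    · simp only [Matrix.sub_apply, Matrix.smul_apply, Matrix.diagonal_apply_eq, smul_eq_mul, hlam']
      by_cases h0' : lam i = 0 <;> simp [h0']
    · simp [Matrix.sub_apply, Matrix.smul_apply, Matrix.diagonal_apply_ne _ hij]
  have hanti' : Antitone lam' := by
    intro i j hij
    have hlam_le := hanti hij
    by_cases hi0 : lam i = 0 <;> by_cases hj0 : lam j = 0
    · simp [hlam', hi0, hj0]
    · simp only [hlam', if_pos hi0, if_neg hj0]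
      rw [hi0] at hlam_le
      rcases lt_or_gt_of_ne hj0 with h' | h'
      · have := hble j h'
        linarith
      · linarith
    · simp only [hlam', if_neg hi0, if_pos hj0]
      rw [hj0] at hlam_le
      linarith
    · simp only [hlam', if_neg hi0, if_neg hj0]
      exact hlam_le
  have hWS := hV y hyV hysymm P lam' ⟨⟨hPPt, hPtP⟩, hanti', hG⟩ C hC
  obtain ⟨v, B, hBs, h1, h2, heq⟩ := hWS
  have hBzero : ∀ i j, lam i ≤ 0 → lam j ≤ 0 → B i j = 0 := by
    intro i j hi hj
    exact h2 i j ((hlamneg i).2 hi) ((hlamneg j).2 hj)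
  exact ⟨v, B, hBs, fun i j hi hj => hBzero i j (le_of_eq hi) (le_of_eq hj),
    fun i j hi hj => hBzero i j (le_of_eq hi) (le_of_lt hj),
    fun i j hi hj => hBzero i j (le_of_lt hi) (le_of_lt hj), heq⟩

lemma sgn_exists_freq (f : ℕ → (Fin n → SignType)) :
    ∃ σ, ∃ᶠ k in Filter.atTop, f k = σ := by
  by_contra hcon
  push_neg at hcon
  have : ∀ᶠ k in Filter.atTop, ∀ σ : Fin n → SignType, ¬ f k = σ :=
    Filter.eventually_all.2 fun σ => hcon σ
  obtain ⟨k, hk⟩ := this.exists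
  exact hk (f k) rfl

lemma entry_isSymm {A : Mat n} (h : A.IsSymm) (i j : Fin n) : A j i = A i j := by
  conv_rhs => rw [← h]
  rfl

lemma a_to_b (g : Em m → Mat n) (hg : ContDiff ℝ 2 g) (hgs : ∀ x, (g x).IsSymm)
    (zbar : Em m × Mat n) (ha : CNondeg g zbar) :
    ∃ U : Set (Em m × Mat n), IsOpen U ∧ zbar ∈ U ∧ ∀ z ∈ U, z.2.IsSymm → WSRCQ g z := by
  classical
  by_contra hno
  push_neg at hno
  have hGcont : Continuous (Gmap g) := by
    exact ((hg.continuous).comp continuous_fst).add continuous_snd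
  obtain ⟨δ, hδpos, hδ⟩ := Metric.continuous_iff.1 hGcont zbar 1 one_pos
  have hz : ∀ k : ℕ, ∃ z : Em m × Mat n,
      z ∈ Metric.ball zbar (min δ (1/(k+1))) ∧ z.2.IsSymm ∧ ¬WSRCQ g z := by
    intro k
    have hmem : zbar ∈ Metric.ball zbar (min δ (1/(k+1))) := by
      rw [Metric.mem_ball, dist_self]
      exact lt_min hδpos (by positivity)
    obtain ⟨z, hz1, hz2, hz3⟩ := hno _ Metric.isOpen_ball hmem
    exact ⟨z, hz1, hz2, hz3⟩
  choose z hzball hzsym hzws using hz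
  have hws : ∀ k, ∃ P lam, IsEigDecomp (Gmap g (z k)) P lam ∧
      ∃ C : Mat n, C.IsSymm ∧ C ∉ bigSub g (z k).1 P lam := by
    intro k
    have h := hzws k
    rw [WSRCQ] at h
    push_neg at h
    obtain ⟨P, lam, hdec, C, hCs, hnb⟩ := h
    refine ⟨P, lam, hdec, C, hCs, fun hmem => ?_⟩
    obtain ⟨v, B, hB, heq⟩ := bigSub_symm_mem g hg hgs _ P lam C hCs hmem
    exact hnb v B hB.1 hB.2.1 hB.2.2 heq
  choose P lam hdec C hCs hCnot using hws
  have hDex : ∀ k, ∃ D : Mat n, dotM D D = 1 ∧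
      ∀ X ∈ bigSub g (z k).1 (P k) (lam k), dotM D X = 0 := by
    intro k
    refine exists_perp _ (fun htop => hCnot k ?_)
    rw [htop]
    exact Submodule.mem_top
  choose D hD1 hDperp using hDex
  have hPo : ∀ k, (P k) * (P k)ᵀ = 1 := fun k => (hdec k).1.1
  have hPo' : ∀ k, (P k)ᵀ * (P k) = 1 := fun k => (hdec k).1.2
  have hanti : ∀ k, Antitone (lam k) := fun k => (hdec k).2.1
  have hGdec : ∀ k, Gmap g (z k) = P k * Matrix.diagonal (lam k) * (P k)ᵀ :=
    fun k => (hdec k).2.2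
  have hDsym : ∀ k, (D k).IsSymm := by
    intro k
    refine isSymm_of_perp_skew (D k) (fun X hX => hDperp k X ?_)
    exact (le_sup_right : skewSub ≤ bigSub g (z k).1 (P k) (lam k)) hX
  -- convergence of z
  have hzt : Filter.Tendsto z Filter.atTop (nhds zbar) := by
    refine tendsto_iff_dist_tendsto_zero.2 ?_
    refine squeeze_zero (fun k => dist_nonneg) (fun k => ?_) tendsto_one_div_add_atTop_nhds_zero_nat
    have := hzball k
    rw [Metric.mem_ball] at this
    exact le_of_lt (lt_of_lt_of_le this (min_le_right _ _))
  -- bounds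
  have hGb : ∀ k, ‖Gmap g (z k)‖ ≤ ‖Gmap g zbar‖ + 1 := by
    intro k
    have h1 : dist (z k) zbar < δ := lt_of_lt_of_le (Metric.mem_ball.1 (hzball k)) (min_le_left _ _)
    have h2 := hδ (z k) h1
    rw [dist_eq_norm] at h2
    have := norm_sub_norm_le (Gmap g (z k)) (Gmap g zbar)
    linarith
  have hPentry : ∀ k i j, |P k i j| ≤ 1 := by
    intro k i j
    have h1 : ∑ a, P k i a * P k i a = 1 := by
      have := congrFun (congrFun (hPo k) i) i
      simpa [Matrix.mul_apply, Matrix.transpose_apply, Matrix.one_apply] using this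
    have h2 : P k i j * P k i j ≤ 1 := by
      rw [← h1]
      exact Finset.single_le_sum (f := fun a => P k i a * P k i a)
        (fun a _ => mul_self_nonneg _) (Finset.mem_univ j)
    nlinarith [abs_nonneg (P k i j), sq_abs (P k i j)]
  have hPnorm : ∀ k, ‖P k‖ ≤ n := by
    intro k
    have h1 : ‖P k‖ ^ 2 = (n : ℝ) := by
      rw [norm_sq_eq_dotM]
      unfold dotM
      have : ∀ i, ∑ j, P k i j * P k i j = 1 := by
        intro i
        have := congrFun (congrFun (hPo k) i) i
        simpa [Matrix.mul_apply, Matrix.transpose_apply, Matrix.one_apply] using this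
      simp [this]
    have hn2 : (n:ℝ) ≤ (n:ℝ)^2 := by
      have h' : (n:ℕ) ≤ n^2 := by nlinarith [Nat.zero_le n]
      exact_mod_cast h'
    nlinarith [norm_nonneg (P k)]
  have hDnorm : ∀ k, ‖D k‖ ≤ 1 := by
    intro k
    have h1 : ‖D k‖ ^ 2 = 1 := by rw [norm_sq_eq_dotM]; exact hD1 k
    nlinarith [norm_nonneg (D k)]
  have hdiagG : ∀ k, Matrix.diagonal (lam k) = (P k)ᵀ * Gmap g (z k) * P k := by
    intro k
    rw [hGdec k]
    calc Matrix.diagonal (lam k)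
        = 1 * Matrix.diagonal (lam k) * 1 := by rw [one_mul, mul_one]
      _ = ((P k)ᵀ * P k) * Matrix.diagonal (lam k) * ((P k)ᵀ * P k) := by rw [hPo' k]
      _ = (P k)ᵀ * (P k * Matrix.diagonal (lam k) * (P k)ᵀ) * P k := by
          simp only [Matrix.mul_assoc]
  set c : ℝ := (n:ℝ)^2 * (‖Gmap g zbar‖ + 1) with hc
  have hcnn : 0 ≤ c := by positivity
  have hlamb : ∀ k i, |lam k i| ≤ c := by
    intro k i
    have h1 : lam k i = ∑ b, (∑ a, P k a i * Gmap g (z k) a b) * P k b i := by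
      have h := congrFun (congrFun (hdiagG k) i) i
      rw [Matrix.diagonal_apply_eq] at h
      rw [h]
      simp [Matrix.mul_apply, Matrix.transpose_apply]
    rw [h1]
    have hbound : ∀ b : Fin n, |(∑ a, P k a i * Gmap g (z k) a b) * P k b i|
        ≤ ∑ a : Fin n, (‖Gmap g zbar‖ + 1) := by
      intro b
      rw [abs_mul]
      have h2 : |∑ a, P k a i * Gmap g (z k) a b| ≤ ∑ a : Fin n, (‖Gmap g zbar‖ + 1) := by
        refine (Finset.abs_sum_le_sum_abs _ _).trans (Finset.sum_le_sum fun a _ => ?_)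
        rw [abs_mul]
        have e1 := hPentry k a i
        have e2 := (abs_entry_le_norm (Gmap g (z k)) a b).trans (hGb k)
        have e3 : (0:ℝ) ≤ |Gmap g (z k) a b| := abs_nonneg _
        nlinarith
      have h3 := hPentry k b i
      have h4 : (0:ℝ) ≤ |∑ a, P k a i * Gmap g (z k) a b| := abs_nonneg _
      have h5 : (0:ℝ) ≤ ∑ a : Fin n, (‖Gmap g zbar‖ + 1) := Finset.sum_nonneg fun _ _ => by positivity
      nlinarith
    calc |∑ b, (∑ a, P k a i * Gmap g (z k) a b) * P k b i|
        ≤ ∑ b, |(∑ a, P k a i * Gmap g (z k) a b) * P k b i| := Finset.abs_sum_le_sum_abs _ _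
      _ ≤ ∑ _b : Fin n, ∑ _a : Fin n, (‖Gmap g zbar‖ + 1) := Finset.sum_le_sum fun b _ => hbound b
      _ = c := by
          simp [Finset.sum_const, hc]
          ring
  have hdiagnorm : ∀ k, ‖Matrix.diagonal (lam k)‖ ≤ (n:ℝ) * c := by
    intro k
    have h1 : ‖Matrix.diagonal (lam k)‖ ^ 2 = ∑ i, lam k i ^ 2 := by
      rw [norm_sq_eq_dotM]
      unfold dotM
      refine Finset.sum_congr rfl fun i _ => ?_
      rw [Finset.sum_eq_single i]
      · rw [Matrix.diagonal_apply_eq, sq]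
      · intro b _ hb
        rw [Matrix.diagonal_apply_ne _ (Ne.symm hb), zero_mul]
      · intro h; exact absurd (Finset.mem_univ i) h
    have h2 : ∑ i, lam k i ^ 2 ≤ (n:ℝ) * c^2 := by
      calc ∑ i, lam k i ^ 2 ≤ ∑ _i : Fin n, c^2 := by
            refine Finset.sum_le_sum fun i _ => ?_
            have := hlamb k i
            nlinarith [abs_nonneg (lam k i), sq_abs (lam k i)]
        _ = (n:ℝ) * c^2 := by simp [Finset.sum_const]
    have hn1 : (n:ℝ) ≤ (n:ℝ)^2 := by
      have h' : (n:ℕ) ≤ n^2 := by nlinarith [Nat.zero_le n]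
      exact_mod_cast h'
    nlinarith [norm_nonneg (Matrix.diagonal (lam k)), Nat.cast_nonneg (α := ℝ) n, sq_nonneg c,
      mul_nonneg (Nat.cast_nonneg (α := ℝ) n) hcnn]
  -- extraction of a constant sign pattern
  obtain ⟨σ, hσfreq⟩ := sgn_exists_freq (fun k i => SignType.sign (lam k i))
  obtain ⟨φ₁, hφ₁mono, hφ₁sgn⟩ := Filter.extraction_of_frequently_atTop hσfreq
  -- compact extraction
  have hKcomp : IsCompact ((Metric.closedBall (0: Mat n) n) ×ˢ
      ((Metric.closedBall (0: Mat n) 1) ×ˢ (Metric.closedBall (0: Mat n) ((n:ℝ) * c)))) :=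
    (isCompact_closedBall _ _).prod ((isCompact_closedBall _ _).prod (isCompact_closedBall _ _))
  haveI : FirstCountableTopology (Mat n) := inferInstanceAs (FirstCountableTopology (Fin n → Fin n → ℝ))
  obtain ⟨lim, hlimK, φ₂, hφ₂mono, hφ₂t⟩ := hKcomp.tendsto_subseq
    (x := fun j => (P (φ₁ j), D (φ₁ j), Matrix.diagonal (lam (φ₁ j))))
    (fun j => by
      refine ⟨?_, ?_, ?_⟩
      · simpa [mem_closedBall_zero_iff] using hPnorm (φ₁ j)
      · simpa [mem_closedBall_zero_iff] using hDnorm (φ₁ j)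
      · simpa [mem_closedBall_zero_iff] using hdiagnorm (φ₁ j))
  obtain ⟨Pl, Dl, Λ⟩ := lim
  set ψ : ℕ → ℕ := φ₁ ∘ φ₂ with hψ
  have hψmono : StrictMono ψ := hφ₁mono.comp hφ₂mono
  have hPt : Filter.Tendsto (fun j => P (ψ j)) Filter.atTop (nhds Pl) :=
    (continuous_fst.tendsto (Pl, Dl, Λ)).comp hφ₂t
  have hDt : Filter.Tendsto (fun j => D (ψ j)) Filter.atTop (nhds Dl) :=
    ((continuous_fst.comp continuous_snd).tendsto (Pl, Dl, Λ)).comp hφ₂t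
  have hΛt : Filter.Tendsto (fun j => Matrix.diagonal (lam (ψ j)) : ℕ → Mat n)
      Filter.atTop (nhds Λ) :=
    ((continuous_snd.comp continuous_snd).tendsto (Pl, Dl, Λ)).comp hφ₂t
  have EP : ETend (fun j => P (ψ j)) Pl := ETend.of_norm hPt
  have EDt : ETend (fun j => D (ψ j)) Dl := ETend.of_norm hDt
  have EΛ : ETend (fun j => Matrix.diagonal (lam (ψ j))) Λ := ETend.of_norm hΛt
  set μ : Fin n → ℝ := fun i => Λ i i with hμ
  have hμt : ∀ i, Filter.Tendsto (fun j => lam (ψ j) i) Filter.atTop (nhds (μ i)) := by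
    intro i
    have h := EΛ i i
    simpa [Matrix.diagonal_apply_eq] using h
  have hΛdiag : Λ = Matrix.diagonal μ := by
    ext i j
    rcases eq_or_ne i j with rfl | hij
    · rw [Matrix.diagonal_apply_eq]
    · have h0 : Filter.Tendsto (fun j' => (Matrix.diagonal (lam (ψ j')) : Mat n) i j)
          Filter.atTop (nhds 0) := by
        have heq : (fun j' => (Matrix.diagonal (lam (ψ j')) : Mat n) i j) = fun _ => (0:ℝ) :=
          funext fun j' => Matrix.diagonal_apply_ne _ hij
        rw [heq]
        exact tendsto_const_nhds
      rw [tendsto_nhds_unique (EΛ i j) h0, Matrix.diagonal_apply_ne _ hij]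
  have hzψ : Filter.Tendsto (fun j => z (ψ j)) Filter.atTop (nhds zbar) :=
    hzt.comp hψmono.tendsto_atTop
  have hGψ : Filter.Tendsto (fun j => Gmap g (z (ψ j))) Filter.atTop (nhds (Gmap g zbar)) :=
    (hGcont.tendsto zbar).comp hzψ
  have EG : ETend (fun j => Gmap g (z (ψ j))) (Gmap g zbar) := ETend.of_norm hGψ
  have EG2 : ETend (fun j => Gmap g (z (ψ j))) (Pl * Λ * Plᵀ) := by
    have h := (EP.mul EΛ).mul EP.transpose
    have heq : (fun j => P (ψ j) * Matrix.diagonal (lam (ψ j)) * (P (ψ j))ᵀ)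
        = fun j => Gmap g (z (ψ j)) := funext fun j => (hGdec (ψ j)).symm
    rwa [heq] at h
  have hGzbar : Gmap g zbar = Pl * Matrix.diagonal μ * Plᵀ := by
    rw [← hΛdiag]
    exact EG.unique EG2
  have hPlo : Pl * Plᵀ = 1 := by
    refine ETend.unique (A := fun j => P (ψ j) * (P (ψ j))ᵀ) (EP.mul EP.transpose) ?_
    have heq : (fun j => P (ψ j) * (P (ψ j))ᵀ) = fun _ => (1 : Mat n) :=
      funext fun j => hPo (ψ j)
    rw [heq]
    exact ETend.const 1
  have hPlo' : Plᵀ * Pl = 1 := by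
    refine ETend.unique (A := fun j => (P (ψ j))ᵀ * P (ψ j)) (EP.transpose.mul EP) ?_
    have heq : (fun j => (P (ψ j))ᵀ * P (ψ j)) = fun _ => (1 : Mat n) :=
      funext fun j => hPo' (ψ j)
    rw [heq]
    exact ETend.const 1
  have hμanti : Antitone μ := fun i j hij =>
    le_of_tendsto_of_tendsto' (hμt j) (hμt i) (fun k => hanti (ψ k) hij)
  have hDl1 : dotM Dl Dl = 1 := by
    have h1 := EDt.dot EDt
    have h2 : (fun j => dotM (D (ψ j)) (D (ψ j))) = fun _ => (1:ℝ) :=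
      funext fun j => hD1 (ψ j)
    rw [h2] at h1
    exact (tendsto_nhds_unique h1 tendsto_const_nhds)
  have hDlsym : Dl.IsSymm := by
    rw [Matrix.IsSymm]
    ext i j
    rw [Matrix.transpose_apply]
    have h1 := EDt j i
    have h2 : (fun k => D (ψ k) j i) = fun k => D (ψ k) i j :=
      funext fun k => entry_isSymm (hDsym (ψ k)) i j
    rw [h2] at h1
    exact tendsto_nhds_unique h1 (EDt i j)
  have hfc : Continuous fun x => fderiv ℝ g x := hg.continuous_fderiv (by norm_num)
  have hperpL : ∀ v : Em m, dotM Dl (fderiv ℝ g zbar.1 v) = 0 := by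
    intro v
    have hx : Filter.Tendsto (fun j => (z (ψ j)).1) Filter.atTop (nhds zbar.1) :=
      (continuous_fst.tendsto zbar).comp hzψ
    have happ : Filter.Tendsto (fun j => fderiv ℝ g (z (ψ j)).1 v) Filter.atTop
        (nhds (fderiv ℝ g zbar.1 v)) := by
      have hcont2 : Continuous fun x => fderiv ℝ g x v := hfc.clm_apply continuous_const
      exact (hcont2.tendsto zbar.1).comp hx
    have hperpk : ∀ j, dotM (D (ψ j)) (fderiv ℝ g (z (ψ j)).1 v) = 0 := by
      intro j
      refine hDperp (ψ j) _ ?_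
      exact Submodule.mem_sup_left (Submodule.mem_sup_left (LinearMap.mem_range.2 ⟨v, rfl⟩))
    have h1 := EDt.dot (ETend.of_norm happ)
    have h2 : (fun j => dotM (D (ψ j)) (fderiv ℝ g (z (ψ j)).1 v)) = fun _ => (0:ℝ) :=
      funext hperpk
    rw [h2] at h1
    exact tendsto_nhds_unique h1 tendsto_const_nhds
  have ENt : ETend (fun j => (P (ψ j))ᵀ * D (ψ j) * P (ψ j)) (Plᵀ * Dl * Pl) :=
    (EP.transpose.mul EDt).mul EP
  have hsgn : ∀ jdx i, SignType.sign (lam (ψ jdx) i) = σ i :=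
    fun jdx i => congrFun (hφ₁sgn (φ₂ jdx)) i
  have hposall : ∀ i, 0 < μ i → ∀ jdx, 0 < lam (ψ jdx) i := by
    intro i hi jdx
    obtain ⟨k0, hk0⟩ := ((hμt i).eventually (lt_mem_nhds hi)).exists
    have h1 : σ i = 1 := by rw [← hsgn k0 i]; exact sign_pos hk0
    have h2 := hsgn jdx i
    rw [h1] at h2
    exact sign_eq_one_iff.1 h2
  have hN0 : ∀ i j, (0 < μ i ∨ 0 < μ j) → (Plᵀ * Dl * Pl) i j = 0 := by
    intro i j hij
    have hposk : ∀ jdx, 0 < lam (ψ jdx) i ∨ 0 < lam (ψ jdx) j := by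
      rcases hij with h | h
      · exact fun jdx => Or.inl (hposall i h jdx)
      · exact fun jdx => Or.inr (hposall j h jdx)
    have hNk : ∀ jdx, ((P (ψ jdx))ᵀ * D (ψ jdx) * P (ψ jdx)) i j = 0 := by
      intro jdx
      have hB0mem : (Matrix.single i j (1:ℝ) + Matrix.single j i 1)
          ∈ patSub (lam (ψ jdx)) := by
        have hentry : ∀ a b, lam (ψ jdx) a ≤ 0 → lam (ψ jdx) b < 0 →
            ((Matrix.single i j (1:ℝ) + Matrix.single j i 1 : Mat n)) a b = 0 := by
          intro a b hla hlb
          have hab1 : ¬(i = a ∧ j = b) := by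
            rintro ⟨rfl, rfl⟩
            rcases hposk jdx with h | h
            · exact absurd hla (not_le.2 h)
            · exact absurd hlb (asymm h)
          have hab2 : ¬(j = a ∧ i = b) := by
            rintro ⟨rfl, rfl⟩
            rcases hposk jdx with h | h
            · exact absurd hlb (asymm h)
            · exact absurd hla (not_le.2 h)
          show (if i = a ∧ j = b then (1:ℝ) else 0) + (if j = a ∧ i = b then (1:ℝ) else 0) = 0
          rw [if_neg hab1, if_neg hab2, add_zero]
        refine ⟨?_, fun a b ha hb => hentry a b (le_of_eq ha) hb,
          fun a b ha hb => hentry a b (le_of_lt ha) hb⟩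
        rw [Matrix.IsSymm, Matrix.transpose_add, std_transpose, std_transpose]
        exact add_comm _ _
      have hmem : (conjL (P (ψ jdx))) (Matrix.single i j (1:ℝ) + Matrix.single j i 1)
          ∈ bigSub g (z (ψ jdx)).1 (P (ψ jdx)) (lam (ψ jdx)) :=
        Submodule.mem_sup_left (Submodule.mem_sup_right (Submodule.mem_map_of_mem hB0mem))
      have h0 := hDperp (ψ jdx) _ hmem
      rw [show (conjL (P (ψ jdx))) (Matrix.single i j (1:ℝ) + Matrix.single j i 1)
          = P (ψ jdx) * (Matrix.single i j (1:ℝ) + Matrix.single j i 1) * (P (ψ jdx))ᵀ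
          from rfl] at h0
      rw [dotM_conj, Matrix.transpose_transpose, dotM_add_right, dotM_std, dotM_std] at h0
      have hsymN : ((P (ψ jdx))ᵀ * D (ψ jdx) * P (ψ jdx)) j i
          = ((P (ψ jdx))ᵀ * D (ψ jdx) * P (ψ jdx)) i j := by
        have hsym2 : ((P (ψ jdx))ᵀ * D (ψ jdx) * P (ψ jdx)).IsSymm := by
          have := conj_isSymm (P (ψ jdx))ᵀ (D (ψ jdx)) (hDsym (ψ jdx))
          rwa [Matrix.transpose_transpose] at this
        exact entry_isSymm hsym2 i j
      rw [hsymN] at h0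
      linarith
    have h1 := ENt i j
    rw [show (fun jdx => ((P (ψ jdx))ᵀ * D (ψ jdx) * P (ψ jdx)) i j) = fun _ => (0:ℝ)
      from funext hNk] at h1
    exact (tendsto_nhds_unique h1 tendsto_const_nhds)
  -- apply constraint nondegeneracy at the limit
  obtain ⟨v, B, hBs, h00, h0n, hnn, heq⟩ := ha Pl μ ⟨⟨hPlo, hPlo'⟩, hμanti, hGzbar⟩ Dl hDlsym
  have hdot : dotM Dl Dl = dotM Dl (fderiv ℝ g zbar.1 v) + dotM Dl (Pl * B * Plᵀ) := by
    rw [← dotM_add_right, ← heq]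
  rw [hDl1, hperpL v, zero_add, dotM_conj, Matrix.transpose_transpose] at hdot
  have hzero : dotM (Plᵀ * Dl * Pl) B = 0 := by
    unfold dotM
    refine Finset.sum_eq_zero fun i _ => Finset.sum_eq_zero fun j _ => ?_
    by_cases hpos : 0 < μ i ∨ 0 < μ j
    · rw [hN0 i j hpos, zero_mul]
    · push_neg at hpos
      obtain ⟨hi, hj⟩ := hpos
      have hB0 : B i j = 0 := by
        rcases hi.lt_or_eq with hi' | hi' <;> rcases hj.lt_or_eq with hj' | hj'
        · exact hnn i j hi' hj'
        · exact (entry_isSymm hBs i j).symm.trans (h0n j i hj' hi')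
        · exact h0n i j hi' hj'
        · exact h00 i j hi' hj'
      rw [hB0, mul_zero]
  rw [hzero] at hdot
  exact one_ne_zero hdot

end Aux

/-- Constraint nondegeneracy at `z̄` is equivalent to the local collective
validity of the W-SRCQ: (a) ↔ (b) and (a) ↔ (c). -/
theorem CNondeg_iff_local_WSRCQ {m n : ℕ}
    (g : Em m → Mat n)
    (hg : ContDiff ℝ 2 g) (hgs : ∀ x, (g x).IsSymm)
    (zbar : Em m × Mat n) (hsym : zbar.2.IsSymm) :
    (CNondeg g zbar ↔
      ∃ U : Set (Em m × Mat n), IsOpen U ∧ zbar ∈ U ∧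
        ∀ z ∈ U, z.2.IsSymm → WSRCQ g z) ∧
    (CNondeg g zbar ↔
      ∃ V : Set (Mat n), IsOpen V ∧ zbar.2 ∈ V ∧
        ∀ y ∈ V, y.IsSymm → WSRCQ g (zbar.1, y)) := by
  exact ⟨⟨fun ha => a_to_b g hg hgs zbar ha,
      fun hb => c_to_a g zbar hsym (b_to_c g zbar hb)⟩,
    ⟨fun ha => b_to_c g zbar (a_to_b g hg hgs zbar ha),
      fun hc => c_to_a g zbar hsym hc⟩⟩
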